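/- Let A be a commutative ring of prime characteristic p, D a derivation of A, and f ∈ A. Then (fD)^p = f^p·D^p + ((fD)^{p-1}(f))·D as derivations of A (Hochschild's formula). -/
import Mathlib

set_option linter.unusedSectionVars false

namespace Stmt6Aux

variable {A : Type*} [CommRing A]

/-- Coefficients in the expansion `(f·D)^n = Σ_i cc n i · D^i`. -/
def cc (f : A) (D : A → A) : ℕ → ℕ → A
  | 0, 0 => 1
  | 0, _+1 => 0
  | n+1, 0 => f * D (cc f D n 0)
  | n+1, i+1 => f * D (cc f D n (i+1)) + f * cc f D n i

section General

variable (f : A) (D : A → A)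
variable (hadd : ∀ x y, D (x + y) = D x + D y)
variable (hmul : ∀ x y, D (x * y) = D x * y + x * D y)

include hadd in
lemma D0 : D 0 = 0 := by
  have := hadd 0 0; simp at this; exact this

include hadd hmul in
lemma D1 : D 1 = 0 := by
  have := hmul 1 1; simp at this; exact this

include hadd in
lemma Dsum {ι : Type*} (s : Finset ι) (g : ι → A) :
    D (∑ i ∈ s, g i) = ∑ i ∈ s, D (g i) :=
  map_sum (AddMonoidHom.mk' D hadd) g s

include hadd in
lemma Dnsmul (n : ℕ) (x : A) : D (n • x) = n • D x :=
  map_nsmul (AddMonoidHom.mk' D hadd) n x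

include hadd hmul in
lemma cc_eq_zero_of_lt : ∀ n i, n < i → cc f D n i = 0 := by
  intro n
  induction n with
  | zero => intro i hi; match i, hi with | (j+1), _ => rfl
  | succ n ih =>
    intro i hi
    match i, hi with
    | (j+1), hi =>
      show f * D (cc f D n (j+1)) + f * cc f D n j = 0
      rw [ih (j+1) (by omega), ih j (by omega), D0 D hadd]
      ring

include hadd hmul in
lemma cc_zero : ∀ n, cc f D (n+1) 0 = 0 := by
  intro n
  induction n with
  | zero =>
    show f * D (cc f D 0 0) = 0
    show f * D 1 = 0
    rw [D1 D hadd hmul]; ring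
  | succ n ih => show f * D (cc f D (n+1) 0) = 0; rw [ih, D0 D hadd]; ring

include hadd hmul in
lemma cc_diag : ∀ n, cc f D n n = f ^ n := by
  intro n
  induction n with
  | zero => rw [pow_zero]; rfl
  | succ n ih =>
    show f * D (cc f D n (n+1)) + f * cc f D n n = f ^ (n+1)
    rw [cc_eq_zero_of_lt f D hadd hmul n (n+1) (by omega), D0 D hadd, ih]
    ring

include hadd hmul in
lemma cc_one : ∀ n, cc f D (n+1) 1 = (fun x => f * D x)^[n] f := by
  intro n
  induction n with
  | zero =>
    show f * D (cc f D 0 1) + f * cc f D 0 0 = f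
    show f * D 0 + f * 1 = f
    rw [D0 D hadd]; ring
  | succ n ih =>
    show f * D (cc f D (n+1) 1) + f * cc f D (n+1) 0 = _
    rw [ih, cc_zero f D hadd hmul, Function.iterate_succ_apply']
    ring

include hadd hmul in
lemma expansion : ∀ (n : ℕ) (x : A),
    (fun y => f * D y)^[n] x = ∑ i ∈ Finset.range (n+1), cc f D n i * D^[i] x := by
  intro n
  induction n with
  | zero => intro x; simp [show cc f D 0 0 = (1:A) from rfl]
  | succ n ih =>
    intro x
    rw [Function.iterate_succ_apply']
    show f * D ((fun y => f * D y)^[n] x) = _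
    rw [ih x, Dsum D hadd]
    have step : ∀ i ∈ Finset.range (n+1), D (cc f D n i * D^[i] x)
        = D (cc f D n i) * D^[i] x + cc f D n i * D^[i+1] x := by
      intro i _
      rw [hmul, Function.iterate_succ_apply']
    rw [Finset.sum_congr rfl step, Finset.mul_sum]
    rw [Finset.sum_range_succ' (fun i => cc f D (n+1) i * D^[i] x) (n+1)]
    have hc0 : cc f D (n+1) 0 * D^[0] x = f * D (cc f D n 0) * D^[0] x := rfl
    have hcs : ∀ i ∈ Finset.range (n+1), cc f D (n+1) (i+1) * D^[i+1] x
        = f * D (cc f D n (i+1)) * D^[i+1] x + f * cc f D n i * D^[i+1] x := by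
      intro i _
      show (f * D (cc f D n (i+1)) + f * cc f D n i) * D^[i+1] x = _
      ring
    rw [hc0, Finset.sum_congr rfl hcs, Finset.sum_add_distrib]
    have e1 : (∑ i ∈ Finset.range (n+1), f * D (cc f D n (i+1)) * D^[i+1] x)
        + f * D (cc f D n 0) * D^[0] x
        = ∑ i ∈ Finset.range (n+2), f * D (cc f D n i) * D^[i] x := by
      rw [Finset.sum_range_succ' (fun i => f * D (cc f D n i) * D^[i] x) (n+1)]
    have e2 : ∑ i ∈ Finset.range (n+2), f * D (cc f D n i) * D^[i] x
        = ∑ i ∈ Finset.range (n+1), f * D (cc f D n i) * D^[i] x := by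
      rw [Finset.sum_range_succ]
      rw [cc_eq_zero_of_lt f D hadd hmul n (n+1) (by omega), D0 D hadd]
      ring
    rw [add_right_comm, e1, e2, ← Finset.sum_add_distrib]
    apply Finset.sum_congr rfl
    intro i _
    ring

lemma cc_natural {A' : Type*} [CommRing A'] (φ : A →+* A') (f' : A') (D' : A' → A')
    (hf : φ f = f') (hD : ∀ x, φ (D x) = D' (φ x)) :
    ∀ n i, φ (cc f D n i) = cc f' D' n i := by
  intro n
  induction n with
  | zero =>
    intro i
    match i with
    | 0 => show φ 1 = (1 : A'); simp
    | i+1 => show φ 0 = (0 : A'); simp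
  | succ n ih =>
    intro i
    match i with
    | 0 => show φ (f * D (cc f D n 0)) = f' * D' (cc f' D' n 0)
           rw [map_mul, hf, hD, ih]
    | i+1 =>
      show φ (f * D (cc f D n (i+1)) + f * cc f D n i) = _
      rw [map_add, map_mul, map_mul, hf, hD, ih, ih]
      rfl

include hadd hmul in
lemma leibniz_iterate : ∀ (n : ℕ) (x y : A),
    D^[n] (x * y) = ∑ k ∈ Finset.range (n+1), n.choose k • (D^[k] x * D^[n-k] y) := by
  intro n
  induction n with
  | zero => intro x y; simp
  | succ n ih =>
    intro x y
    rw [Function.iterate_succ_apply', ih, Dsum D hadd]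
    have step : ∀ k ∈ Finset.range (n+1),
        D (n.choose k • (D^[k] x * D^[n-k] y))
        = n.choose k • (D^[k+1] x * D^[n-k] y) + n.choose k • (D^[k] x * D^[n+1-k] y) := by
      intro k hk
      simp only [Finset.mem_range] at hk
      rw [Dnsmul D hadd, hmul, ← Function.iterate_succ_apply' D k x,
        ← Function.iterate_succ_apply' D (n-k) y, smul_add]
      have : n - k + 1 = n + 1 - k := by omega
      simp only [Nat.succ_eq_add_one, this]
    rw [Finset.sum_congr rfl step, Finset.sum_add_distrib]
    rw [Finset.sum_range_succ' (fun k => (n+1).choose k • (D^[k] x * D^[n+1-k] y)) (n+1)]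
    have e1 : ∀ k ∈ Finset.range (n+1),
        (n+1).choose (k+1) • (D^[k+1] x * D^[n+1-(k+1)] y)
        = n.choose k • (D^[k+1] x * D^[n-k] y) + n.choose (k+1) • (D^[k+1] x * D^[n-k] y) := by
      intro k hk
      have h2 : n + 1 - (k+1) = n - k := by omega
      rw [h2, Nat.choose_succ_succ, add_smul]
    rw [Finset.sum_congr rfl e1, Finset.sum_add_distrib]
    have e2 : (∑ k ∈ Finset.range (n+1), n.choose (k+1) • (D^[k+1] x * D^[n-k] y))
        + (n+1).choose 0 • (D^[0] x * D^[n+1-0] y)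
        = ∑ k ∈ Finset.range (n+1), n.choose k • (D^[k] x * D^[n+1-k] y) := by
      have h3 := Finset.sum_range_succ' (fun k => n.choose k • (D^[k] x * D^[n+1-k] y)) (n+1)
      rw [Finset.sum_range_succ (fun k => n.choose k • (D^[k] x * D^[n+1-k] y)) (n+1),
        Nat.choose_succ_self, zero_smul, add_zero] at h3
      rw [h3]
      congr 1
      · apply Finset.sum_congr rfl
        intro k hk
        have h2 : n + 1 - (k+1) = n - k := by omega
        rw [h2]
      · simp
    rw [add_assoc, e2]

include hadd hmul in
lemma iterate_p_leibniz (p : ℕ) (hp : p.Prime) [CharP A p] (x y : A) :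
    D^[p] (x * y) = D^[p] x * y + x * D^[p] y := by
  rw [leibniz_iterate D hadd hmul p x y]
  rw [Finset.sum_range_succ, Nat.choose_self, one_smul, Nat.sub_self]
  have hmid : ∑ k ∈ Finset.range p, p.choose k • (D^[k] x * D^[p-k] y) = x * D^[p] y := by
    rw [Finset.sum_eq_single 0]
    · simp
    · intro k hk hk0
      have hz : (p.choose k : A) = 0 := by
        rw [CharP.cast_eq_zero_iff A p]
        exact hp.dvd_choose_self hk0 (Finset.mem_range.mp hk)
      rw [nsmul_eq_mul, hz, zero_mul]
    · intro h; exact absurd (Finset.mem_range.mpr hp.pos) h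
  rw [hmid]
  simp [mul_comm, add_comm]

end General


section Universal

open MvPolynomial

variable (p : ℕ) [hp : Fact p.Prime]

noncomputable def d0 : Derivation (ZMod p) (MvPolynomial ℕ (ZMod p)) (MvPolynomial ℕ (ZMod p)) :=
  MvPolynomial.mkDerivation _ (fun n => MvPolynomial.X (n+1))

noncomputable def dB : Derivation (ZMod p) (MvPolynomial (ℕ ⊕ (ℕ ⊕ ℕ)) (ZMod p))
    (MvPolynomial (ℕ ⊕ (ℕ ⊕ ℕ)) (ZMod p)) :=
  MvPolynomial.mkDerivation _ (Sum.elim (fun n => MvPolynomial.X (Sum.inl (n+1)))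
    (Sum.elim (fun n => MvPolynomial.X (Sum.inr (Sum.inl (n+1))))
      (fun n => MvPolynomial.X (Sum.inr (Sum.inr (n+1))))))

lemma d0_X (n : ℕ) : d0 p (X n) = X (n+1) := MvPolynomial.mkDerivation_X _ _ _

lemma dB_X1 (n : ℕ) : dB p (X (Sum.inl n)) = X (Sum.inl (n+1)) := MvPolynomial.mkDerivation_X _ _ _
lemma dB_X2 (n : ℕ) : dB p (X (Sum.inr (Sum.inl n))) = X (Sum.inr (Sum.inl (n+1))) :=
  MvPolynomial.mkDerivation_X _ _ _
lemma dB_X3 (n : ℕ) : dB p (X (Sum.inr (Sum.inr n))) = X (Sum.inr (Sum.inr (n+1))) :=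
  MvPolynomial.mkDerivation_X _ _ _

lemma d0_add : ∀ x y, d0 p (x + y) = d0 p x + d0 p y := fun x y => map_add _ x y
lemma d0_mul : ∀ x y, d0 p (x * y) = d0 p x * y + x * d0 p y := by
  intro x y; rw [Derivation.leibniz]; simp [smul_eq_mul]; ring
lemma dB_add : ∀ x y, dB p (x + y) = dB p x + dB p y := fun x y => map_add _ x y
lemma dB_mul : ∀ x y, dB p (x * y) = dB p x * y + x * dB p y := by
  intro x y; rw [Derivation.leibniz]; simp [smul_eq_mul]; ring

lemma d0_it (k n : ℕ) : (⇑(d0 p))^[k] (X n) = X (n + k) := by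
  induction k with
  | zero => rfl
  | succ k ih =>
    rw [Function.iterate_succ_apply', ih, d0_X, Nat.add_assoc]

lemma dB_it2 (k : ℕ) : (⇑(dB p))^[k] (X (Sum.inr (Sum.inl 0))) = X (Sum.inr (Sum.inl k)) := by
  induction k with
  | zero => rfl
  | succ k ih => rw [Function.iterate_succ_apply', ih, dB_X2]

lemma dB_it3 (k : ℕ) : (⇑(dB p))^[k] (X (Sum.inr (Sum.inr 0))) = X (Sum.inr (Sum.inr k)) := by
  induction k with
  | zero => rfl
  | succ k ih => rw [Function.iterate_succ_apply', ih, dB_X3]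

/-- Inclusion of the coefficient universal ring. -/
noncomputable def iota : MvPolynomial ℕ (ZMod p) →ₐ[ZMod p] MvPolynomial (ℕ ⊕ (ℕ ⊕ ℕ)) (ZMod p) :=
  MvPolynomial.aeval (fun n => MvPolynomial.X (Sum.inl n))

lemma iota_comm : ∀ x, iota p (d0 p x) = dB p (iota p x) := by
  intro x
  induction x using MvPolynomial.induction_on with
  | C a =>
    have h1 : (C a : MvPolynomial ℕ (ZMod p)) = algebraMap (ZMod p) _ a := rfl
    rw [h1, Derivation.map_algebraMap, map_zero, AlgHom.commutes, Derivation.map_algebraMap]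
  | add x y hx hy => simp only [map_add, hx, hy]
  | mul_X q n hq =>
    rw [d0_mul, map_add, map_mul, map_mul, map_mul, hq]
    simp only [iota, aeval_X, d0_X]
    rw [dB_mul, dB_X1]

/-- Extraction homomorphism, killing the `u`/`v` variables except slots `1` and `i0 - 1`. -/
noncomputable def eps (i0 : ℕ) :
    MvPolynomial (ℕ ⊕ (ℕ ⊕ ℕ)) (ZMod p) →ₐ[ZMod p] MvPolynomial ℕ (ZMod p) :=
  MvPolynomial.aeval (Sum.elim (fun n => MvPolynomial.X n)
    (Sum.elim (fun k => if k = 1 then 1 else 0) (fun j => if j = i0 - 1 then 1 else 0)))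

lemma eps_iota (i0 : ℕ) : ∀ x, eps p i0 (iota p x) = x := by
  intro x
  induction x using MvPolynomial.induction_on with
  | C a => simp [iota, eps]
  | add x y hx hy => simp only [map_add, hx, hy]
  | mul_X q n hq =>
    rw [map_mul (iota p), map_mul (eps p i0), hq]
    congr 1
    simp [iota, eps]

lemma cc_iota (n i : ℕ) :
    iota p (cc (X 0) (⇑(d0 p)) n i) = cc (X (Sum.inl 0)) (⇑(dB p)) n i := by
  apply cc_natural _ _ (iota p).toRingHom _ _ _ (iota_comm p)
  simp [iota]

/-- The key vanishing of middle coefficients, proved in the universal ring. -/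
lemma cc_middle_zero (i0 : ℕ) (h2 : 2 ≤ i0) (hlt : i0 < p) :
    cc (X 0 : MvPolynomial ℕ (ZMod p)) (⇑(d0 p)) p i0 = 0 := by
  set B := MvPolynomial (ℕ ⊕ (ℕ ⊕ ℕ)) (ZMod p)
  set a : B := X (Sum.inl 0) with ha
  set dd : B → B := ⇑(dB p) with hdd
  set δ : B → B := fun x => a * dd x with hδ
  set u : ℕ → B := fun k => X (Sum.inr (Sum.inl k)) with hu
  set v : ℕ → B := fun k => X (Sum.inr (Sum.inr k)) with hv
  have haddd : ∀ x y, dd (x + y) = dd x + dd y := dB_add p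
  have hmuld : ∀ x y, dd (x * y) = dd x * y + x * dd y := dB_mul p
  have haddδ : ∀ x y, δ (x + y) = δ x + δ y := by
    intro x y; simp only [hδ, haddd]; ring
  have hmulδ : ∀ x y, δ (x * y) = δ x * y + x * δ y := by
    intro x y; simp only [hδ, hmuld]; ring
  have hup : ∀ k, dd^[k] (u 0) = u k := fun k => dB_it2 p k
  have hvp : ∀ k, dd^[k] (v 0) = v k := fun k => dB_it3 p k
  -- the two expansions of δ^[p] (u 0 * v 0)
  have E2 : δ^[p] (u 0 * v 0) = δ^[p] (u 0) * v 0 + u 0 * δ^[p] (v 0) :=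
    iterate_p_leibniz δ haddδ hmulδ p hp.out (u 0) (v 0)
  have exp1 : ∀ x : B, δ^[p] x = ∑ i ∈ Finset.range (p+1), cc a dd p i * dd^[i] x :=
    fun x => expansion a dd haddd hmuld p x
  have E3 : ∀ i, dd^[i] (u 0 * v 0)
      = ∑ k ∈ Finset.range (i+1), i.choose k • (u k * v (i-k)) := by
    intro i
    rw [leibniz_iterate dd haddd hmuld i (u 0) (v 0)]
    exact Finset.sum_congr rfl (fun k _ => by rw [hup, hvp])
  have MAIN : ∑ i ∈ Finset.range (p+1),
        cc a dd p i * (∑ k ∈ Finset.range (i+1), i.choose k • (u k * v (i-k)))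
      = (∑ i ∈ Finset.range (p+1), cc a dd p i * u i) * v 0
        + u 0 * (∑ i ∈ Finset.range (p+1), cc a dd p i * v i) := by
    calc ∑ i ∈ Finset.range (p+1),
          cc a dd p i * (∑ k ∈ Finset.range (i+1), i.choose k • (u k * v (i-k)))
        = ∑ i ∈ Finset.range (p+1), cc a dd p i * dd^[i] (u 0 * v 0) := by
          exact Finset.sum_congr rfl (fun i _ => by rw [E3])
      _ = δ^[p] (u 0 * v 0) := (exp1 _).symm
      _ = δ^[p] (u 0) * v 0 + u 0 * δ^[p] (v 0) := E2
      _ = _ := by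
          rw [exp1, exp1]
          congr 1
          · congr 1
            exact Finset.sum_congr rfl (fun i _ => by rw [hup])
          · congr 1
            exact Finset.sum_congr rfl (fun i _ => by rw [hvp])
  -- apply the extraction homomorphism
  have happ := congrArg (eps p i0) MAIN
  set γ : ℕ → MvPolynomial ℕ (ZMod p) := fun i => cc (X 0) (⇑(d0 p)) p i with hγ
  have hccε : ∀ i, eps p i0 (cc a dd p i) = γ i := by
    intro i
    rw [← cc_iota, eps_iota]
  have hεu : ∀ k, eps p i0 (u k) = if k = 1 then 1 else 0 := by
    intro k; simp [eps, hu]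
  have hεv : ∀ k, eps p i0 (v k) = if k = i0 - 1 then 1 else 0 := by
    intro k; simp [eps, hv]
  rw [map_add, map_mul, map_mul, map_sum, map_sum, map_sum] at happ
  simp only [map_mul, map_sum, map_nsmul, hccε, hεu, hεv] at happ
  -- now a purely combinatorial computation in MvPolynomial ℕ (ZMod p)
  have hL : ∑ i ∈ Finset.range (p+1),
      γ i * (∑ k ∈ Finset.range (i+1), i.choose k •
        ((if k = 1 then (1:MvPolynomial ℕ (ZMod p)) else 0) * (if i - k = i0 - 1 then 1 else 0)))
      = γ i0 * (i0 : MvPolynomial ℕ (ZMod p)) := by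
    rw [Finset.sum_eq_single i0]
    · congr 1
      rw [Finset.sum_eq_single 1]
      · simp [show i0 - 1 = i0 - 1 from rfl, Nat.choose_one_right, nsmul_eq_mul]
      · intro k hk hk1
        simp [hk1]
      · intro h
        exact absurd (Finset.mem_range.mpr (by omega)) h
    · intro i hi hii0
      have : ∀ k ∈ Finset.range (i+1), i.choose k •
          ((if k = 1 then (1:MvPolynomial ℕ (ZMod p)) else 0) * (if i - k = i0 - 1 then 1 else 0)) = 0 := by
        intro k hk
        simp only [Finset.mem_range] at hk
        by_cases h1 : k = 1
        · subst h1
          have : ¬ (i - 1 = i0 - 1) := by omega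
          simp [this]
        · simp [h1]
      rw [Finset.sum_eq_zero this, mul_zero]
    · intro h
      exact absurd (Finset.mem_range.mpr (by omega)) h
  have hR0 : (∑ i ∈ Finset.range (p+1), γ i * (if i = 1 then (1:MvPolynomial ℕ (ZMod p)) else 0))
      * (if (0:ℕ) = i0 - 1 then 1 else 0)
      + (if (0:ℕ) = 1 then (1:MvPolynomial ℕ (ZMod p)) else 0)
      * (∑ i ∈ Finset.range (p+1), γ i * (if i = i0 - 1 then 1 else 0)) = 0 := by
    have h0 : ¬ ((0:ℕ) = i0 - 1) := by omega
    simp [h0]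
  rw [hL, hR0] at happ
  -- conclude
  have hcast : (i0 : MvPolynomial ℕ (ZMod p)) ≠ 0 := by
    rw [Ne, CharP.cast_eq_zero_iff _ p]
    intro hdvd
    have := Nat.le_of_dvd (by omega) hdvd
    omega
  rcases mul_eq_zero.mp happ with h | h
  · exact h
  · exact absurd h hcast

end Universal

end Stmt6Aux

open Stmt6Aux MvPolynomial

/-- Hochschild's formula: over a commutative ring `A` of prime
characteristic `p`, for a derivation `D` of `A` and `f ∈ A`,
`(fD)^p = f^p·D^p + ((fD)^{p-1}(f))·D`, as an identity of additive endomorphisms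
(in characteristic `p` all three terms are again derivations). -/
theorem stmt6 (R A : Type*) [CommRing R] [CommRing A] [Algebra R A]
    (p : ℕ) [hp : Fact p.Prime] [CharP A p]
    (D : Derivation R A A) (f : A) :
    ((f • D).toLinearMap) ^ p =
      f ^ p • (D.toLinearMap ^ p) + ((((f • D).toLinearMap) ^ (p - 1)) f) • D.toLinearMap := by
  classical
  have hp2 : 2 ≤ p := hp.out.two_le
  have hp1 : p - 1 + 1 = p := by omega
  apply LinearMap.ext
  intro g
  simp only [LinearMap.add_apply, LinearMap.smul_apply, Module.End.pow_apply, smul_eq_mul]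
  have hcoe : ⇑((f • D).toLinearMap) = fun x => f * D x := by
    funext x
    show (f • D) x = f * D x
    rw [Derivation.smul_apply, smul_eq_mul]
  have hcoeD : ⇑(D.toLinearMap) = ⇑D := rfl
  rw [hcoe, hcoeD]
  set Dfun : A → A := ⇑D with hDfun
  have hDmul : ∀ x y, Dfun (x * y) = Dfun x * y + x * Dfun y := by
    intro x y
    show D (x * y) = D x * y + x * D y
    rw [Derivation.leibniz, smul_eq_mul, smul_eq_mul]
    ring
  set δA : A → A := fun x => f * Dfun x with hδA
  set vals : (ℕ ⊕ (ℕ ⊕ ℕ)) → A := Sum.elim (fun n => Dfun^[n] f)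
    (Sum.elim (fun n => Dfun^[n] g) (fun n => Dfun^[n] g)) with hvals
  set φ : MvPolynomial (ℕ ⊕ (ℕ ⊕ ℕ)) (ZMod p) →+* A :=
    MvPolynomial.eval₂Hom (ZMod.castHom (dvd_refl p) A) vals with hφ
  have hDnat : ∀ m : ℕ, D ((m : ℕ) : A) = 0 := by
    intro m
    induction m with
    | zero => simp
    | succ m ih => rw [Nat.cast_succ, map_add, ih, Derivation.map_one_eq_zero, add_zero]
  have hφX : ∀ s, φ (X s) = vals s := fun s => by rw [hφ]; exact eval₂Hom_X' _ _ _
  have hφd : ∀ x, φ (Stmt6Aux.dB p x) = Dfun (φ x) := by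
    intro x
    induction x using MvPolynomial.induction_on with
    | C a =>
      haveI : NeZero p := ⟨hp.out.ne_zero⟩
      obtain ⟨m, rfl⟩ := ZMod.natCast_rightInverse.surjective a
      have h1 : (C ((m : ℕ) : ZMod p) : MvPolynomial (ℕ ⊕ (ℕ ⊕ ℕ)) (ZMod p))
          = algebraMap (ZMod p) _ ((m : ℕ) : ZMod p) := rfl
      rw [h1, Derivation.map_algebraMap, map_zero]
      have h2 : φ (algebraMap (ZMod p) _ ((m : ℕ) : ZMod p))
          = ZMod.castHom (dvd_refl p) A ((m : ℕ) : ZMod p) := by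
        rw [hφ]
        exact eval₂Hom_C _ _ _
      rw [h2, map_natCast]
      exact (hDnat m).symm
    | add x y hx hy =>
      rw [map_add (Stmt6Aux.dB p), map_add φ, hx, hy, map_add φ]
      exact (D.map_add _ _).symm
    | mul_X q s hq =>
      rw [Stmt6Aux.dB_mul, map_add, map_mul, map_mul, hq, map_mul, hφX, hDmul]
      congr 1
      rw [← hφX]
      congr 1
      rcases s with n | n | n
      · rw [Stmt6Aux.dB_X1, hφX, hφX]
        show Dfun^[n+1] f = Dfun (Dfun^[n] f)
        rw [Function.iterate_succ_apply']
      · rw [Stmt6Aux.dB_X2, hφX, hφX]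
        show Dfun^[n+1] g = Dfun (Dfun^[n] g)
        rw [Function.iterate_succ_apply']
      · rw [Stmt6Aux.dB_X3, hφX, hφX]
        show Dfun^[n+1] g = Dfun (Dfun^[n] g)
        rw [Function.iterate_succ_apply']
  -- notation in the universal ring
  set aB : MvPolynomial (ℕ ⊕ (ℕ ⊕ ℕ)) (ZMod p) := X (Sum.inl 0) with haB
  set ddB : MvPolynomial (ℕ ⊕ (ℕ ⊕ ℕ)) (ZMod p) → MvPolynomial (ℕ ⊕ (ℕ ⊕ ℕ)) (ZMod p) :=
    ⇑(Stmt6Aux.dB p) with hddB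
  set δB : MvPolynomial (ℕ ⊕ (ℕ ⊕ ℕ)) (ZMod p) → MvPolynomial (ℕ ⊕ (ℕ ⊕ ℕ)) (ZMod p) :=
    fun x => aB * ddB x with hδB
  have hφa : φ aB = f := hφX _
  have hφδ : ∀ (n : ℕ) x, φ (δB^[n] x) = δA^[n] (φ x) := by
    intro n
    induction n with
    | zero => intro x; rfl
    | succ n ih =>
      intro x
      rw [Function.iterate_succ_apply', Function.iterate_succ_apply']
      show φ (aB * ddB (δB^[n] x)) = f * Dfun (δA^[n] (φ x))
      rw [map_mul, hφa, hφd, ih]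
  -- expansion of δB^[p] at the generic point u₀
  have e1 : δB^[p] (X (Sum.inr (Sum.inl 0)))
      = ∑ i ∈ Finset.range (p+1), cc aB ddB p i * X (Sum.inr (Sum.inl i)) := by
    rw [expansion aB ddB (Stmt6Aux.dB_add p) (Stmt6Aux.dB_mul p) p]
    exact Finset.sum_congr rfl (fun i _ => by rw [hddB, Stmt6Aux.dB_it2])
  have hmid : ∀ i, 2 ≤ i → i < p → cc aB ddB p i = 0 := by
    intro i h2 hi
    rw [← Stmt6Aux.cc_iota p, Stmt6Aux.cc_middle_zero p i h2 hi, map_zero]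
  have hcc0 : cc aB ddB p 0 = 0 := by
    have h := cc_zero aB ddB (Stmt6Aux.dB_add p) (Stmt6Aux.dB_mul p) (p-1)
    rwa [hp1] at h
  have hsplit : ∑ i ∈ Finset.range (p+1), cc aB ddB p i * X (Sum.inr (Sum.inl i))
      = cc aB ddB p 1 * X (Sum.inr (Sum.inl 1)) + cc aB ddB p p * X (Sum.inr (Sum.inl p)) := by
    rw [Finset.sum_range_succ]
    congr 1
    rw [Finset.sum_eq_single_of_mem 1 (Finset.mem_range.mpr (by omega))]
    intro i hi hi1
    simp only [Finset.mem_range] at hi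
    rcases Nat.lt_or_ge i 2 with h | h
    · have : i = 0 := by omega
      rw [this, hcc0, zero_mul]
    · rw [hmid i h hi, zero_mul]
  have hccp : cc aB ddB p p = aB ^ p :=
    cc_diag aB ddB (Stmt6Aux.dB_add p) (Stmt6Aux.dB_mul p) p
  have hcc1 : cc aB ddB p 1 = δB^[p-1] aB := by
    have h := cc_one aB ddB (Stmt6Aux.dB_add p) (Stmt6Aux.dB_mul p) (p-1)
    rwa [hp1] at h
  have hg : φ (X (Sum.inr (Sum.inl 0))) = g := hφX _
  calc δA^[p] g
      = φ (δB^[p] (X (Sum.inr (Sum.inl 0)))) := by rw [hφδ, hg]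
    _ = φ (cc aB ddB p 1 * X (Sum.inr (Sum.inl 1)) + cc aB ddB p p * X (Sum.inr (Sum.inl p))) := by
        rw [e1, hsplit]
    _ = f ^ p * Dfun^[p] g + δA^[p-1] f * Dfun g := by
        rw [map_add, map_mul, map_mul, hccp, hcc1, map_pow, hφa, hφδ, hφa, hφX, hφX]
        show δA^[p-1] f * Dfun^[1] g + f ^ p * Dfun^[p] g = _
        rw [Function.iterate_one]
        ring
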